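/- Let k be an integer with 0 ≤ k ≤ (r−3)/2. Then Σ^ξ_n ev_ξ( [n+k choose 2k+1] · {k}! · {n} ) = 2 · w^{(k+1)(k+2)/2} · ∏_{i=0}^{r−k−3}(1 − ξ^{k+2+i}), where ev_ξ evaluates the Laurent polynomial [n+k choose 2k+1]{k}!{n} ∈ ℤ[v^{±1}] at v = w. -/

import Mathlib

noncomputable section

/-- The index set of the sums `Σ^ξ_n`: odd integers `n` with `0 < n < 2r`. -/
def oddS (r : ℕ) : Finset ℕ := (Finset.range (2 * r)).filter (fun n => Odd n)

/-- The evaluation at `v = w` of `{m} = v^m − v^{−m}`. -/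
def brw (w : ℂ) (m : ℤ) : ℂ := w ^ m - w ^ (-m)

/-- The evaluation at `v = w` of the Laurent polynomial `[n+k choose 2k+1]·{k}!·{n}`,
using `[n+k choose 2k+1]·{k}! = {k}!·(∏_{j=0}^{2k} {n−k+j})/{2k+1}!`. -/
def evBinomTerm (w : ℂ) (k n : ℕ) : ℂ :=
  brw w (n : ℤ) * (∏ i ∈ Finset.Icc 1 k, brw w (i : ℤ)) *
      (∏ j ∈ Finset.range (2 * k + 1), brw w ((n : ℤ) - (k : ℤ) + (j : ℤ))) /
    ∏ i ∈ Finset.Icc 1 (2 * k + 1), brw w (i : ℤ)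

namespace LTZF

open Finset

/-- Coefficients of `∏_{t<m} (X - q^t)`:  `cgb q m j` is the coefficient of `X^(m-j)`. -/
def cgb (q : ℂ) : ℕ → ℕ → ℂ
  | 0, 0 => 1
  | 0, _+1 => 0
  | _+1, 0 => 1
  | m+1, j+1 => cgb q m (j+1) - q ^ m * cgb q m j

lemma cgb_zero (q : ℂ) (m : ℕ) : cgb q m 0 = 1 := by cases m <;> rfl

lemma cgb_of_lt (q : ℂ) : ∀ m j : ℕ, m < j → cgb q m j = 0 := by
  intro m
  induction m with
  | zero =>
    intro j hj
    match j, hj with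
    | j+1, _ => rfl
  | succ m ih =>
    intro j hj
    match j, hj with
    | j+1, hj =>
      show cgb q m (j+1) - q ^ m * cgb q m j = 0
      rw [ih _ (by omega), ih _ (by omega)]
      ring

def Aq (q : ℂ) (n : ℕ) : ℂ := ∏ i ∈ Finset.Icc 1 n, (1 - q ^ i)

lemma Aq_zero (q : ℂ) : Aq q 0 = 1 := by simp [Aq]

lemma Aq_succ (q : ℂ) (n : ℕ) : Aq q (n + 1) = Aq q n * (1 - q ^ (n + 1)) := by
  rw [Aq, Aq, Finset.prod_Icc_succ_top (by omega)]

lemma tri_succ (j : ℕ) : (j + 1) * j / 2 = j * (j - 1) / 2 + j := by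
  cases j with
  | zero => rfl
  | succ i =>
    have h : (i + 1 + 1) * (i + 1) = (i + 1) * i + 2 * (i + 1) := by ring
    have he : 2 ∣ (i + 1) * i := by
      rw [mul_comm]; exact (Nat.even_mul_succ_self i).two_dvd
    simp only [Nat.add_sub_cancel]
    omega

lemma cgb_mul (q : ℂ) : ∀ m j : ℕ, j ≤ m →
    cgb q m j * (Aq q j * Aq q (m - j)) = (-1) ^ j * q ^ (j * (j - 1) / 2) * Aq q m := by
  intro m
  induction m with
  | zero =>
    intro j hj
    interval_cases j
    simp [cgb_zero, Aq_zero]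
  | succ m ih =>
    intro j hj
    match j with
    | 0 => simp [cgb_zero, Aq_zero]
    | j+1 =>
      have hrec : cgb q (m+1) (j+1) = cgb q m (j+1) - q ^ m * cgb q m j := rfl
      have htri : (j + 1) * j / 2 = j * (j - 1) / 2 + j := tri_succ j
      rcases eq_or_lt_of_le (Nat.succ_le_succ_iff.mp hj) with hje | hjlt
      · -- j = m
        subst hje
        have h0 : cgb q j (j+1) = 0 := cgb_of_lt q j (j+1) (by omega)
        have IH := ih j le_rfl
        rw [Nat.sub_self, Aq_zero, mul_one] at IH
        rw [hrec, h0, Nat.sub_self, Aq_zero, Aq_succ]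
        simp only [Nat.add_sub_cancel]
        rw [htri, pow_add]
        linear_combination (-(q^j) * (1 - q^(j+1))) * IH
      · -- j + 1 ≤ m
        have hj1 : j + 1 ≤ m := by omega
        have IH1 := ih (j+1) hj1
        have IH2 := ih j (by omega)
        have hms3 : m + 1 - (j+1) = m - j := by omega
        have hb1 : Aq q (j+1) = Aq q j * (1 - q ^ (j+1)) := Aq_succ q j
        have hb2 : Aq q (m - j) = Aq q (m - (j+1)) * (1 - q ^ (m - j)) := by
          have h1 : m - j = (m - (j+1)) + 1 := by omega
          rw [h1, Aq_succ, ← h1]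
        have em : q ^ m = q ^ (m - j) * q ^ j := by
          rw [← pow_add]; congr 1; omega
        simp only [Nat.add_sub_cancel] at IH1 ⊢
        rw [htri, pow_add] at IH1 ⊢
        rw [hrec, hms3, hb2, hb1, Aq_succ q m]
        rw [hb1] at IH1
        rw [hb2] at IH2
        linear_combination (1 - q^(m-j)) * IH1 - q^m * (1 - q^(j+1)) * IH2 +
          ((-1)^(j+1) * q^(j*(j-1)/2) * Aq q m) * em

/-- expansion of the product as a function identity -/
lemma prod_expand (q z : ℂ) :
    ∀ m : ℕ, ∏ t ∈ Finset.range m, (z - q ^ t) =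
      ∑ j ∈ Finset.range (m + 1), cgb q m j * z ^ (m - j) := by
  intro m
  induction m with
  | zero => simp [cgb_zero]
  | succ m ih =>
    rw [Finset.prod_range_succ, ih]
    rw [Finset.sum_range_succ' (fun j => cgb q (m+1) j * z ^ (m + 1 - j)) (m+1)]
    have hrec : ∀ j : ℕ, cgb q (m+1) (j+1) = cgb q m (j+1) - q ^ m * cgb q m j :=
      fun j => rfl
    simp only [cgb_zero, Nat.sub_zero, one_mul, hrec]
    have key : (∑ j ∈ Finset.range (m + 1), cgb q m j * z ^ (m - j)) * z
        = z ^ (m+1) + ∑ j ∈ Finset.range (m + 1), cgb q m (j+1) * z ^ (m - j) := by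
      have h1 : (∑ j ∈ Finset.range (m + 1), cgb q m j * z ^ (m - j)) * z
          = ∑ j ∈ Finset.range (m + 1), cgb q m j * z ^ (m + 1 - j) := by
        rw [Finset.sum_mul]
        refine Finset.sum_congr rfl fun j hj => ?_
        have : m + 1 - j = (m - j) + 1 := by
          have := Finset.mem_range.mp hj; omega
        rw [this, pow_succ]; ring
      rw [h1]
      have h2 : ∑ j ∈ Finset.range (m + 2), cgb q m j * z ^ (m + 1 - j)
          = ∑ j ∈ Finset.range (m + 1), cgb q m (j+1) * z ^ (m - j) + z ^ (m+1) := by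
        rw [Finset.sum_range_succ' (fun j => cgb q m j * z ^ (m + 1 - j)) (m+1)]
        simp [cgb_zero]
      have h3 : ∑ j ∈ Finset.range (m + 2), cgb q m j * z ^ (m + 1 - j)
          = ∑ j ∈ Finset.range (m + 1), cgb q m j * z ^ (m + 1 - j) := by
        rw [Finset.sum_range_succ, cgb_of_lt q m (m+1) (by omega)]
        simp
      rw [← h3, h2]; ring
    rw [mul_sub, key]
    simp only [Nat.succ_sub_succ_eq_sub, sub_mul, Finset.sum_sub_distrib, mul_assoc]
    rw [← Finset.mul_sum]
    ring

/-- symmetric reindexing of a product over `range (2k+1)` centered at `a` -/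
lemma prod_shift (F : ℤ → ℂ) (a : ℤ) :
    ∀ k : ℕ, ∏ j ∈ Finset.range (2 * k + 1), F (a - k + j) =
      F a * ∏ t ∈ Finset.Icc 1 k, (F (a + t) * F (a - t)) := by
  intro k
  induction k with
  | zero => simp
  | succ k ih =>
    have h1 : 2 * (k+1) + 1 = (2 * k + 1 + 1) + 1 := by ring
    rw [h1, Finset.prod_range_succ, Finset.prod_range_succ']
    have h2 : ∀ j ∈ Finset.range (2*k+1),
        F (a - ((k+1:ℕ):ℤ) + ((j+1:ℕ):ℤ)) = F (a - (k:ℤ) + (j:ℤ)) := by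
      intro j _; congr 1; push_cast; ring
    rw [Finset.prod_congr rfl h2, ih]
    rw [Finset.prod_Icc_succ_top (by omega : 1 ≤ k + 1)]
    have e1 : a - ((k+1:ℕ):ℤ) + ((2*k+1+1:ℕ):ℤ) = a + ((k+1:ℕ):ℤ) := by push_cast; ring
    have e2 : a - ((k+1:ℕ):ℤ) + ((0:ℕ):ℤ) = a - ((k+1:ℕ):ℤ) := by push_cast; ring
    rw [e1, e2]
    ring

/-- the key pairing identity -/
lemma pair (w ξ : ℂ) (hw : w ≠ 0) (h2 : w * w = ξ) (a t : ℤ) :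
    brw w (a + t) * brw w (a - t) = (ξ ^ a - ξ ^ t) * (ξ ^ a - ξ ^ (-t)) * ξ ^ (-a) := by
  subst h2
  have hA : w ^ a ≠ 0 := zpow_ne_zero a hw
  have hB : w ^ t ≠ 0 := zpow_ne_zero t hw
  simp only [brw, zpow_add₀ hw, zpow_sub₀ hw, mul_zpow, neg_add_rev, zpow_neg]
  field_simp

/-- geometric sum over a primitive root -/
lemma geo (r : ℕ) (ξ : ℂ) (hξ : IsPrimitiveRoot ξ r) (m : ℤ) :
    ∑ n ∈ Finset.range r, ξ ^ ((n : ℤ) * m) = if (r:ℤ) ∣ m then (r : ℂ) else 0 := by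
  have hsum : ∀ n : ℕ, ξ ^ ((n : ℤ) * m) = (ξ ^ m) ^ n := by
    intro n; rw [mul_comm, zpow_mul, zpow_natCast]
  simp only [hsum]
  by_cases hdvd : (r:ℤ) ∣ m
  · rw [if_pos hdvd]
    have h1 : ξ ^ m = 1 := (hξ.zpow_eq_one_iff_dvd m).mpr hdvd
    simp [h1]
  · rw [if_neg hdvd]
    have h1 : ξ ^ m ≠ 1 := fun h => hdvd ((hξ.zpow_eq_one_iff_dvd m).mp h)
    rw [geom_sum_eq h1]
    have h2 : (ξ ^ m) ^ r = 1 := by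
      rw [← zpow_natCast, ← zpow_mul, mul_comm, zpow_mul, zpow_natCast, hξ.pow_eq_one, one_zpow]
    rw [h2, sub_self, zero_div]

end LTZF

open LTZF Finset in
set_option maxHeartbeats 1000000 in
theorem laplace_transform_zero_framing (r : ℕ) (hr : 3 ≤ r) (hodd : Odd r) (ξ : ℂ)
    (hξ : IsPrimitiveRoot ξ r) (k : ℕ) (hk : k ≤ (r - 3) / 2) :
    ∑ n ∈ oddS r, evBinomTerm (ξ ^ ((r + 1) / 2)) k n =
      2 * (ξ ^ ((r + 1) / 2)) ^ (((k + 1) * (k + 2)) / 2) *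
        ∏ i ∈ Finset.range (r - k - 2), (1 - ξ ^ (k + 2 + i)) := by
  have hrodd : r % 2 = 1 := Nat.odd_iff.mp hodd
  have hkr : 2 * k + 3 ≤ r := by omega
  set w : ℂ := ξ ^ ((r + 1) / 2) with hw
  have hr0 : r ≠ 0 := by omega
  have hξ0 : ξ ≠ 0 := hξ.ne_zero hr0
  have hw0 : w ≠ 0 := pow_ne_zero _ hξ0
  have h2 : w * w = ξ := by
    rw [hw, ← pow_add]
    have he : (r + 1) / 2 + (r + 1) / 2 = r + 1 := by omega
    rw [he, pow_succ, hξ.pow_eq_one, one_mul]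
  have hwr : w ^ r = 1 := by
    rw [hw, ← pow_mul, mul_comm, pow_mul, hξ.pow_eq_one, one_pow]
  -- periodicity
  have brw_per : ∀ m : ℤ, brw w (m + r) = brw w m := by
    intro m
    have h1 : w ^ ((r:ℕ):ℤ) = (1:ℂ) := by rw [zpow_natCast, hwr]
    have h2 : w ^ (-((r:ℕ):ℤ)) = (1:ℂ) := by rw [zpow_neg, h1, inv_one]
    simp only [brw, neg_add, zpow_add₀ hw0, h1, h2, mul_one]
  have hper : ∀ n : ℕ, evBinomTerm w k (n + r) = evBinomTerm w k n := by
    intro n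
    have hc : ((n + r : ℕ) : ℤ) = (n:ℤ) + r := by push_cast; ring
    rw [evBinomTerm, evBinomTerm, hc, brw_per]
    have hprod : ∀ j ∈ Finset.range (2*k+1),
        brw w ((n:ℤ) + (r:ℤ) - (k:ℤ) + (j:ℤ)) = brw w ((n:ℤ) - (k:ℤ) + (j:ℤ)) := by
      intro j _
      rw [show (n:ℤ) + (r:ℤ) - (k:ℤ) + (j:ℤ) = ((n:ℤ) - (k:ℤ) + (j:ℤ)) + r by ring, brw_per]
    rw [Finset.prod_congr rfl hprod]
  -- reindex the sum
  have hreindex : ∑ n ∈ oddS r, evBinomTerm w k n = ∑ n ∈ Finset.range r, evBinomTerm w k n := by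
    refine (Finset.sum_nbij' (fun n => if n < r then n else n - r)
      (fun n => if Odd n then n else n + r) ?_ ?_ ?_ ?_ ?_).symm.symm
    · intro a ha
      simp only [oddS, Finset.mem_filter, Finset.mem_range] at ha
      have hodd' := ha.2
      rw [Nat.odd_iff] at hodd'
      simp only [Finset.mem_range]
      split <;> omega
    · intro a ha
      simp only [Finset.mem_range] at ha
      by_cases hodda : Odd a
      · simp only [if_pos hodda, oddS, Finset.mem_filter, Finset.mem_range]
        exact ⟨by omega, hodda⟩
      · simp only [if_neg hodda, oddS, Finset.mem_filter, Finset.mem_range]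
        constructor
        · omega
        · rw [Nat.odd_iff] at hodda ⊢
          omega
    · intro a ha
      simp only [oddS, Finset.mem_filter, Finset.mem_range] at ha
      by_cases hlt : a < r
      · simp only [if_pos hlt, if_pos ha.2]
      · have h1 : ¬ Odd (a - r) := by
          rcases ha.2 with ⟨t, ht⟩
          rw [Nat.odd_iff]; omega
        simp only [if_neg hlt, if_neg h1]
        omega
    · intro a ha
      simp only [Finset.mem_range] at ha
      by_cases hodda : Odd a
      · simp only [if_pos hodda, if_pos ha]
      · have h1 : ¬ (a + r < r) := by omega
        simp only [if_neg hodda, if_neg h1]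
        omega
    · intro a ha
      simp only [oddS, Finset.mem_filter, Finset.mem_range] at ha
      by_cases hlt : a < r
      · simp only [if_pos hlt]
      · simp only [if_neg hlt]
        have h1 : a = (a - r) + r := by omega
        conv_lhs => rw [h1]
        rw [hper]
  -- pointwise expansion
  set C : ℂ := ∏ i ∈ Finset.Icc 1 k, brw w (i : ℤ) with hC
  set D : ℂ := ∏ i ∈ Finset.Icc 1 (2*k+1), brw w (i : ℤ) with hD
  have hzz : ∀ (a : ℤ) (m : ℕ), (ξ ^ a) ^ m = ξ ^ (a * m) := by
    intro a m; rw [← zpow_natCast (ξ ^ a) m, ← zpow_mul]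
  have hpoint : ∀ n : ℕ, evBinomTerm w k n = ∑ j ∈ Finset.range (2*k+2),
      C / D * cgb ξ (2*k+1) j * ξ ^ (-((k:ℤ)*(j:ℤ))) *
        (ξ ^ ((n:ℤ) * ((k:ℤ)+1-(j:ℤ))) - ξ ^ ((n:ℤ) * ((k:ℤ)-(j:ℤ)))) := by
    intro n
    set PIcc : ℂ := ∏ t ∈ Finset.Icc 1 k, ((ξ^((n:ℤ)) - ξ^((t:ℤ))) * (ξ^((n:ℤ)) - ξ^(-(t:ℤ)))) with hPIcc
    set S1 : ℂ := ∑ j ∈ Finset.range (2*k+2), cgb ξ (2*k+1) j * (ξ^((n:ℤ)+(k:ℤ)))^(2*k+1-j) with hS1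
    have hPS : (∏ j ∈ Finset.range (2*k+1), brw w ((n:ℤ) - (k:ℤ) + (j:ℤ)))
        = brw w (n:ℤ) * (PIcc * (ξ^(-(n:ℤ)))^k) := by
      rw [prod_shift (brw w) ((n:ℤ)) k]
      have hp : ∀ t ∈ Finset.Icc 1 k, brw w ((n:ℤ) + (t:ℤ)) * brw w ((n:ℤ) - (t:ℤ))
          = ((ξ^((n:ℤ)) - ξ^((t:ℤ))) * (ξ^((n:ℤ)) - ξ^(-(t:ℤ)))) * ξ^(-(n:ℤ)) := by
        intro t _
        rw [pair w ξ hw0 h2]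
      rw [Finset.prod_congr rfl hp, Finset.prod_mul_distrib, Finset.prod_const, Nat.card_Icc,
        Nat.add_sub_cancel, ← hPIcc]
    have hbb : brw w (n:ℤ) * brw w (n:ℤ) = (ξ^((n:ℤ)) - 1) * (ξ^((n:ℤ)) - 1) * ξ^(-(n:ℤ)) := by
      have h := pair w ξ hw0 h2 (n:ℤ) 0
      simpa using h
    have hsh : (∏ j ∈ Finset.range (2*k+1), (ξ^((n:ℤ)) - ξ^(-(k:ℤ) + (j:ℤ))))
        = (ξ^((n:ℤ)) - 1) * PIcc := by
      have h := prod_shift (fun m : ℤ => ξ^((n:ℤ)) - ξ^m) (0:ℤ) k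
      simp only [zero_add, zero_sub, zpow_zero] at h
      rw [hPIcc]
      exact h
    have hexp : (∏ j ∈ Finset.range (2*k+1), (ξ^((n:ℤ)) - ξ^(-(k:ℤ) + (j:ℤ))))
        = (ξ^(-(k:ℤ)))^(2*k+1) * S1 := by
      have hf : ∀ j ∈ Finset.range (2*k+1), (ξ^((n:ℤ)) - ξ^(-(k:ℤ) + (j:ℤ)))
          = ξ^(-(k:ℤ)) * (ξ^((n:ℤ)+(k:ℤ)) - ξ^j) := by
        intro j _
        have hme : ξ^(-(k:ℤ)) * ξ^((n:ℤ)+(k:ℤ)) = ξ^((n:ℤ)) := by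
          rw [← zpow_add₀ hξ0]; congr 1; ring
        calc ξ^((n:ℤ)) - ξ^(-(k:ℤ)+(j:ℤ))
            = ξ^(-(k:ℤ)) * ξ^((n:ℤ)+(k:ℤ)) - ξ^(-(k:ℤ)) * ξ^((j:ℤ)) := by
              rw [hme, ← zpow_add₀ hξ0]
          _ = ξ^(-(k:ℤ)) * (ξ^((n:ℤ)+(k:ℤ)) - ξ^j) := by rw [zpow_natCast]; ring
      rw [Finset.prod_congr rfl hf, Finset.prod_mul_distrib, Finset.prod_const,
        Finset.card_range, hS1, prod_expand ξ (ξ^((n:ℤ)+(k:ℤ))) (2*k+1)]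
    have hsum2 : C * (ξ^((n:ℤ)) - 1) * ξ^(-(n:ℤ)) * (ξ^(-(n:ℤ)))^k * (ξ^(-(k:ℤ)))^(2*k+1) * S1
        = ∑ j ∈ Finset.range (2*k+2), C * cgb ξ (2*k+1) j * ξ ^ (-((k:ℤ)*(j:ℤ))) *
          (ξ ^ ((n:ℤ) * ((k:ℤ)+1-(j:ℤ))) - ξ ^ ((n:ℤ) * ((k:ℤ)-(j:ℤ)))) := by
      rw [hS1, Finset.mul_sum]
      refine Finset.sum_congr rfl fun j hj => ?_
      have hj' : j ≤ 2*k+1 := by have := Finset.mem_range.mp hj; omega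
      simp only [hzz]
      rw [Nat.cast_sub hj']
      push_cast
      have hA : ξ ^ (-(n:ℤ)) * ξ ^ (-(n:ℤ) * (k:ℤ)) * ξ ^ (-(k:ℤ) * (2*(k:ℤ)+1)) *
          ξ ^ (((n:ℤ)+(k:ℤ)) * (2*(k:ℤ)+1-(j:ℤ)))
          = ξ ^ ((n:ℤ)*((k:ℤ)-(j:ℤ)) - (k:ℤ)*(j:ℤ)) := by
        rw [← zpow_add₀ hξ0, ← zpow_add₀ hξ0, ← zpow_add₀ hξ0]; congr 1; ring
      have hB : ξ^((n:ℤ)) * ξ^((n:ℤ)*((k:ℤ)-(j:ℤ)) - (k:ℤ)*(j:ℤ))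
          = ξ^((n:ℤ)*((k:ℤ)+1-(j:ℤ)) - (k:ℤ)*(j:ℤ)) := by
        rw [← zpow_add₀ hξ0]; congr 1; ring
      have hC1 : ξ^(-((k:ℤ)*(j:ℤ))) * ξ^((n:ℤ)*((k:ℤ)+1-(j:ℤ)))
          = ξ^((n:ℤ)*((k:ℤ)+1-(j:ℤ)) - (k:ℤ)*(j:ℤ)) := by
        rw [← zpow_add₀ hξ0]; congr 1; ring
      have hC2 : ξ^(-((k:ℤ)*(j:ℤ))) * ξ^((n:ℤ)*((k:ℤ)-(j:ℤ)))
          = ξ^((n:ℤ)*((k:ℤ)-(j:ℤ)) - (k:ℤ)*(j:ℤ)) := by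
        rw [← zpow_add₀ hξ0]; congr 1; ring
      linear_combination (C * cgb ξ (2*k+1) j * (ξ^((n:ℤ)) - 1)) * hA
        + (C * cgb ξ (2*k+1) j) * hB
        - (C * cgb ξ (2*k+1) j) * hC1
        + (C * cgb ξ (2*k+1) j) * hC2
    rw [evBinomTerm, ← hC, ← hD]
    have hT : (∑ j ∈ Finset.range (2*k+2), C / D * cgb ξ (2*k+1) j * ξ ^ (-((k:ℤ)*(j:ℤ))) *
          (ξ ^ ((n:ℤ) * ((k:ℤ)+1-(j:ℤ))) - ξ ^ ((n:ℤ) * ((k:ℤ)-(j:ℤ)))))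
        = (∑ j ∈ Finset.range (2*k+2), C * cgb ξ (2*k+1) j * ξ ^ (-((k:ℤ)*(j:ℤ))) *
          (ξ ^ ((n:ℤ) * ((k:ℤ)+1-(j:ℤ))) - ξ ^ ((n:ℤ) * ((k:ℤ)-(j:ℤ))))) / D := by
      rw [Finset.sum_div]
      exact Finset.sum_congr rfl fun j _ => by ring
    rw [hT]
    have hnum : brw w (n:ℤ) * C * (∏ j ∈ Finset.range (2*k+1), brw w ((n:ℤ) - (k:ℤ) + (j:ℤ)))
        = ∑ j ∈ Finset.range (2*k+2), C * cgb ξ (2*k+1) j * ξ ^ (-((k:ℤ)*(j:ℤ))) *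
          (ξ ^ ((n:ℤ) * ((k:ℤ)+1-(j:ℤ))) - ξ ^ ((n:ℤ) * ((k:ℤ)-(j:ℤ)))) := by
      linear_combination (brw w (n:ℤ) * C) * hPS
        + (C * (ξ^(-(n:ℤ)))^k * PIcc) * hbb
        - (C * (ξ^(-(n:ℤ)))^k * (ξ^((n:ℤ)) - 1) * ξ^(-(n:ℤ))) * hsh
        + (C * (ξ^(-(n:ℤ)))^k * (ξ^((n:ℤ)) - 1) * ξ^(-(n:ℤ))) * hexp
        + hsum2
    rw [hnum]
  -- sum over n using geometric sums
  have hsum : ∑ n ∈ Finset.range r, evBinomTerm w k n =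
      C / D * cgb ξ (2*k+1) (k+1) * ξ ^ (-((k:ℤ)*((k:ℤ)+1))) * r -
      C / D * cgb ξ (2*k+1) k * ξ ^ (-((k:ℤ)*(k:ℤ))) * r := by
    rw [Finset.sum_congr rfl fun n _ => hpoint n, Finset.sum_comm]
    have hinner : ∀ j ∈ Finset.range (2*k+2),
        (∑ n ∈ Finset.range r, C / D * cgb ξ (2*k+1) j * ξ ^ (-((k:ℤ)*(j:ℤ))) *
          (ξ ^ ((n:ℤ)*((k:ℤ)+1-(j:ℤ))) - ξ ^ ((n:ℤ)*((k:ℤ)-(j:ℤ)))))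
        = (if j = k+1 then C / D * cgb ξ (2*k+1) j * ξ ^ (-((k:ℤ)*(j:ℤ))) * r else 0)
          - (if j = k then C / D * cgb ξ (2*k+1) j * ξ ^ (-((k:ℤ)*(j:ℤ))) * r else 0) := by
      intro j hj
      have hjlt : j < 2*k+2 := Finset.mem_range.mp hj
      rw [← Finset.mul_sum, Finset.sum_sub_distrib, geo r ξ hξ, geo r ξ hξ]
      have h1 : ((r:ℤ) ∣ ((k:ℤ)+1-(j:ℤ))) ↔ j = k+1 := by
        constructor
        · intro hdvd
          have h0 := Int.eq_zero_of_abs_lt_dvd hdvd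
            (by rw [abs_lt]; constructor <;> push_cast <;> omega)
          omega
        · intro h; subst h; push_cast; simp
      have h2' : ((r:ℤ) ∣ ((k:ℤ)-(j:ℤ))) ↔ j = k := by
        constructor
        · intro hdvd
          have h0 := Int.eq_zero_of_abs_lt_dvd hdvd
            (by rw [abs_lt]; constructor <;> push_cast <;> omega)
          omega
        · intro h; subst h; push_cast; simp
      rw [if_congr h1 rfl rfl, if_congr h2' rfl rfl]
      split_ifs <;> ring
    rw [Finset.sum_congr rfl hinner, Finset.sum_sub_distrib,
      Finset.sum_ite_eq' (Finset.range (2*k+2)) (k+1), Finset.sum_ite_eq' (Finset.range (2*k+2)) k,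
      if_pos (Finset.mem_range.mpr (by omega : k+1 < 2*k+2)),
      if_pos (Finset.mem_range.mpr (by omega : k < 2*k+2))]
    push_cast
    ring
  rw [hreindex, hsum]
  -- final algebra
  set E : ℂ := ∏ i ∈ Finset.Icc (k+1) (2*k+1), brw w (i:ℤ) with hEdef
  set B : ℂ := ∏ i ∈ Finset.Icc (k+1) (2*k+1), (1 - ξ^i) with hBdef
  set BR : ℂ := ∏ i ∈ Finset.Icc (k+2) (r-1), (1 - ξ^i) with hBRdef
  set S : ℕ := ∑ i ∈ Finset.Icc (k+1) (2*k+1), i with hSdef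
  have hone_sub : ∀ i : ℕ, 1 ≤ i → i ≤ r-1 → (1:ℂ) - ξ^i ≠ 0 := by
    intro i hi1 hi2
    have := hξ.pow_ne_one_of_pos_of_lt (by omega : i ≠ 0) (by omega : i < r)
    exact sub_ne_zero.mpr (Ne.symm this)
  have hAq_ne : ∀ m : ℕ, m ≤ r-1 → Aq ξ m ≠ 0 := by
    intro m hm
    rw [Aq]
    apply Finset.prod_ne_zero_iff.mpr
    intro i hi
    have h := Finset.mem_Icc.mp hi
    exact hone_sub i h.1 (by omega)
  have hfac : ∀ i : ℕ, brw w (i:ℤ) = (-1) * ((w⁻¹)^i * (1 - ξ^i)) := by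
    intro i
    have hξw : ξ^i = w^i * w^i := by rw [← h2, mul_pow]
    have hinv : (w⁻¹)^i * w^i = 1 := by rw [← mul_pow, inv_mul_cancel₀ hw0, one_pow]
    rw [brw, zpow_natCast, zpow_neg, zpow_natCast, ← inv_pow]
    linear_combination (-((w⁻¹)^i)) * hξw + (-(w^i)) * hinv
  have hbrw_ne : ∀ i : ℕ, 1 ≤ i → i ≤ r-1 → brw w (i:ℤ) ≠ 0 := by
    intro i hi1 hi2
    rw [hfac i]
    exact mul_ne_zero (by norm_num)
      (mul_ne_zero (pow_ne_zero _ (inv_ne_zero hw0)) (hone_sub i hi1 hi2))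
  have hC0 : C ≠ 0 := by
    rw [hC]
    apply Finset.prod_ne_zero_iff.mpr
    intro i hi
    have h := Finset.mem_Icc.mp hi
    exact hbrw_ne i h.1 (by omega)
  have hE0 : E ≠ 0 := by
    rw [hEdef]
    apply Finset.prod_ne_zero_iff.mpr
    intro i hi
    have h := Finset.mem_Icc.mp hi
    exact hbrw_ne i (by omega) (by omega)
  have hsplit : ∀ (f : ℕ → ℂ) (a b : ℕ), a ≤ b →
      (∏ i ∈ Finset.Icc 1 a, f i) * (∏ i ∈ Finset.Icc (a+1) b, f i) = ∏ i ∈ Finset.Icc 1 b, f i := by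
    intro f a b hab
    rw [← Finset.Ico_add_one_right_eq_Icc, ← Finset.Ico_add_one_right_eq_Icc, ← Finset.Ico_add_one_right_eq_Icc]
    exact Finset.prod_Ico_consecutive f (by omega) (by omega)
  have hDCE : D = C * E := by
    rw [hD, hC, hEdef]
    exact (hsplit (fun i => brw w (i:ℤ)) k (2*k+1) (by omega)).symm
  have hCD : C / D = 1 / E := by
    rw [hDCE]
    field_simp
  have hABk : Aq ξ k * B = Aq ξ (2*k+1) := by
    rw [Aq, Aq, hBdef]
    exact hsplit (fun i => 1 - ξ^i) k (2*k+1) (by omega)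
  have hAkR : Aq ξ (k+1) * BR = Aq ξ (r-1) := by
    rw [Aq, Aq, hBRdef]
    have := hsplit (fun i => 1 - ξ^i) (k+1) (r-1) (by omega)
    rwa [show k+1+1 = k+2 from rfl] at this
  have hEB : E = (-1)^(k+1) * (w⁻¹)^S * B := by
    rw [hEdef, Finset.prod_congr rfl (fun i _ => hfac i), Finset.prod_mul_distrib,
      Finset.prod_mul_distrib, Finset.prod_const, Nat.card_Icc,
      show 2*k+1+1-(k+1) = k+1 from by omega, Finset.prod_pow_eq_pow_sum, ← hSdef, ← hBdef]
    ring
  have hRR : (∏ i ∈ Finset.range (r - k - 2), (1 - ξ ^ (k + 2 + i))) = BR := by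
    rw [hBRdef, ← Finset.Ico_add_one_right_eq_Icc, show r-1+1 = r from by omega,
      Finset.prod_Ico_eq_prod_range, show r - (k+2) = r-k-2 from by omega]
  have hAr : Aq ξ (r-1) = (r:ℂ) := by
    have hξ' : IsPrimitiveRoot ξ ((r-1)+1) := by rwa [show r-1+1 = r from by omega]
    have h := hξ'.prod_one_sub_pow_eq_order
    rw [Aq, ← Finset.Ico_add_one_right_eq_Icc, show r-1+1 = r from by omega,
      Finset.prod_Ico_eq_prod_range]
    rw [show r - 1 = r-1 from rfl] at h ⊢
    calc ∏ i ∈ Finset.range (r-1), (1 - ξ^(1+i))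
        = ∏ i ∈ Finset.range (r-1), (1 - ξ^(i+1)) := by
          exact Finset.prod_congr rfl fun i _ => by rw [add_comm]
      _ = (r:ℂ) := by
          rw [h, Nat.cast_sub (by omega : 1 ≤ r)]
          push_cast
          ring
  -- coefficient values
  have f1 := cgb_mul ξ (2*k+1) (k+1) (by omega)
  rw [show 2*k+1-(k+1) = k from by omega] at f1
  simp only [Nat.add_sub_cancel] at f1
  have f2 := cgb_mul ξ (2*k+1) k (by omega)
  rw [show 2*k+1-k = k+1 from by omega] at f2
  -- exponent bookkeeping
  have hwpow : ∀ a : ℤ, ξ^a = w^(2*a) := by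
    intro a
    rw [← h2, mul_zpow, show (2:ℤ)*a = a + a from by ring, zpow_add₀ hw0]
  have hT1 : ((k+1)*k/2) * 2 = (k+1)*k := by
    apply Nat.div_mul_cancel
    rw [mul_comm]
    exact (Nat.even_mul_succ_self k).two_dvd
  have hP : (((k+1)*(k+2))/2) * 2 = (k+1)*(k+2) := by
    apply Nat.div_mul_cancel
    have := Nat.even_mul_succ_self (k+1)
    rw [show k+1+1 = k+2 from by omega] at this
    exact this.two_dvd
  have hT2 : (k*(k-1)/2) * 2 + k = k*k := by
    cases k with
    | zero => rfl
    | succ j =>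
      simp only [Nat.add_sub_cancel]
      have hc : ((j+1)*j/2)*2 = (j+1)*j := by
        apply Nat.div_mul_cancel
        rw [mul_comm]
        exact (Nat.even_mul_succ_self j).two_dvd
      have hring : (j+1)*(j+1) = (j+1)*j + (j+1) := by ring
      linarith only [hc, hring]
  have hsum_split : (∑ i ∈ Finset.range (k+1), i) + S = ∑ i ∈ Finset.range (2*k+2), i := by
    rw [hSdef, Finset.range_eq_Ico, Finset.range_eq_Ico, ← Finset.Ico_add_one_right_eq_Icc,
      show 2*k+1+1 = 2*k+2 from by omega]
    exact Finset.sum_Ico_consecutive _ (by omega) (by omega)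
  have g1 := Finset.sum_range_id_mul_two (k+1)
  have g2 := Finset.sum_range_id_mul_two (2*k+2)
  rw [Nat.add_sub_cancel] at g1
  rw [show 2*k+2-1 = 2*k+1 from by omega] at g2
  have hS2 : S * 2 = (k+1)*(3*k+2) := by
    have hr2 : (2*k+2)*(2*k+1) = (k+1)*(3*k+2) + (k+1)*k := by ring
    linarith only [g1, g2, hsum_split, hr2]
  have hb1 : ξ^((k+1)*k/2) * ξ^(-((k:ℤ)*((k:ℤ)+1))) = w^(((k+1)*(k+2))/2) * (w⁻¹)^S := by
    rw [← zpow_natCast ξ ((k+1)*k/2), ← zpow_add₀ hξ0, hwpow,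
      ← zpow_natCast w (((k+1)*(k+2))/2), inv_pow, ← zpow_natCast w S, ← zpow_neg,
      ← zpow_add₀ hw0]
    congr 1
    have c1 : (((k+1)*k/2 : ℕ):ℤ) * 2 = ((k:ℤ)+1)*(k:ℤ) := by exact_mod_cast hT1
    have c2 : ((((k+1)*(k+2))/2 : ℕ):ℤ) * 2 = ((k:ℤ)+1)*((k:ℤ)+2) := by exact_mod_cast hP
    have c3 : ((S:ℕ):ℤ) * 2 = ((k:ℤ)+1)*(3*(k:ℤ)+2) := by exact_mod_cast hS2
    linarith only [c1, c2, c3]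
  have hb2 : ξ^(k*(k-1)/2) * ξ^(-((k:ℤ)*(k:ℤ))) = w^(((k+1)*(k+2))/2) * (w⁻¹)^S := by
    rw [← zpow_natCast ξ (k*(k-1)/2), ← zpow_add₀ hξ0, hwpow,
      ← zpow_natCast w (((k+1)*(k+2))/2), inv_pow, ← zpow_natCast w S, ← zpow_neg,
      ← zpow_add₀ hw0]
    congr 1
    have c1 : ((k*(k-1)/2 : ℕ):ℤ) * 2 + (k:ℤ) = (k:ℤ)*(k:ℤ) := by exact_mod_cast hT2
    have c2 : ((((k+1)*(k+2))/2 : ℕ):ℤ) * 2 = ((k:ℤ)+1)*((k:ℤ)+2) := by exact_mod_cast hP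
    have c3 : ((S:ℕ):ℤ) * 2 = ((k:ℤ)+1)*(3*(k:ℤ)+2) := by exact_mod_cast hS2
    linarith only [c1, c2, c3]
  have hinv : 1 / E * E = 1 := one_div_mul_cancel hE0
  rw [hCD, hRR]
  refine mul_right_cancel₀ (show E * (Aq ξ k * Aq ξ (k+1)) ≠ 0 from
    mul_ne_zero hE0 (mul_ne_zero (hAq_ne k (by omega)) (hAq_ne (k+1) (by omega)))) ?_
  linear_combination
    ((r:ℂ) * (cgb ξ (2*k+1) (k+1) * ξ^(-((k:ℤ)*((k:ℤ)+1))) * (Aq ξ k * Aq ξ (k+1))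
      - cgb ξ (2*k+1) k * ξ^(-((k:ℤ)*(k:ℤ))) * (Aq ξ k * Aq ξ (k+1)))) * hinv
    + ((r:ℂ) * ξ^(-((k:ℤ)*((k:ℤ)+1)))) * f1
    - ((r:ℂ) * ξ^(-((k:ℤ)*(k:ℤ)))) * f2
    + ((r:ℂ) * (-1)^(k+1) * Aq ξ (2*k+1)) * hb1
    + ((r:ℂ) * (-1)^(k+1) * Aq ξ (2*k+1)) * hb2
    - (2 * w^(((k+1)*(k+2))/2) * BR * Aq ξ k * Aq ξ (k+1)) * hEB
    - (2 * w^(((k+1)*(k+2))/2) * (-1)^(k+1) * (w⁻¹)^S * BR * Aq ξ (k+1)) * hABk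
    - (2 * w^(((k+1)*(k+2))/2) * (-1)^(k+1) * (w⁻¹)^S * Aq ξ (2*k+1)) * hAkR
    - (2 * w^(((k+1)*(k+2))/2) * (-1)^(k+1) * (w⁻¹)^S * Aq ξ (2*k+1)) * hAr

end
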